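/- Let G = ⟨S|R⟩ be the group given by the Section-4 construction. Then every geodesic ray γ in G whose intersection function ρ_γ is sublinear has bounded intersection function. Equivalently, for every geodesic ray γ, either ρ_γ is bounded or ρ_γ is not sublinear. (This is the paper's Proposition 4.7: every Morse geodesic ray in Cay(G,S) is strongly contracting, Theorem A(2).) -/

import Mathlib

namespace SmallCancel

/-- A word over `S`: a finite sequence of letters from the symmetrized alphabet
`S ∪ S⁻¹`, encoded as pairs `(s, b)` where `b = true` denotes the letter `s`
and `b = false` denotes its formal inverse `s⁻¹`. -/
abbrev Word (S : Type) := List (S × Bool)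

/-- The formal inverse of a word. -/
def wInv {S : Type} (w : Word S) : Word S := (w.map fun a => (a.1, !a.2)).reverse

/-- A word is reduced if no letter is immediately followed by its inverse. -/
def Reduced {S : Type} (w : Word S) : Prop := w.Chain' fun a b => b ≠ (a.1, !a.2)

/-- A word is cyclically reduced if all of its cyclic shifts are reduced. -/
def CyclicallyReduced {S : Type} (w : Word S) : Prop := ∀ n, Reduced (w.rotate n)

/-- `R̄`: the set of all cyclic shifts of elements of `R` and of their inverses. -/
def cyclicClosure {S : Type} (R : Set (Word S)) : Set (Word S) :=
  {w | ∃ r ∈ R, ∃ n, w = r.rotate n ∨ w = (wInv r).rotate n}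

/-- `p` is a piece with respect to `R` if it is a prefix of two distinct elements
of `R̄`. -/
def IsPiece {S : Type} (R : Set (Word S)) (p : Word S) : Prop :=
  ∃ r₁ ∈ cyclicClosure R, ∃ r₂ ∈ cyclicClosure R, r₁ ≠ r₂ ∧ p <+: r₁ ∧ p <+: r₂

/-- The `C'(λ)` small-cancellation condition: every piece `p` that is a subword of
some `r ∈ R̄` satisfies `|p| < λ|r|`. -/
def SmallCancellation {S : Type} (R : Set (Word S)) (lam : ℝ) : Prop :=
  ∀ p, IsPiece R p → ∀ r ∈ cyclicClosure R, p <:+: r →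
    (p.length : ℝ) < lam * r.length

/-- The element of the presented group `⟨S | R⟩` represented by a word `w`. -/
def toPresented {S : Type} (R : Set (Word S)) (w : Word S) :
    PresentedGroup {g : FreeGroup S | ∃ r ∈ R, g = FreeGroup.mk r} :=
  QuotientGroup.mk (FreeGroup.mk w)

/-- A word `w` is geodesic if every word representing the same element of the
presented group `⟨S | R⟩` is at least as long as `w`. -/
def IsGeodesicWord {S : Type} (R : Set (Word S)) (w : Word S) : Prop :=
  ∀ v : Word S, toPresented R v = toPresented R w → w.length ≤ v.length

/-- The finite prefix of length `n` of an infinite word `γ`. -/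
def rayPrefix {S : Type} (γ : ℕ → S × Bool) (n : ℕ) : Word S := (List.range n).map γ

/-- A geodesic ray: an infinite word all of whose finite prefixes are geodesic. -/
def IsGeodesicRay {S : Type} (R : Set (Word S)) (γ : ℕ → S × Bool) : Prop :=
  ∀ n, IsGeodesicWord R (rayPrefix γ n)

/-- The intersection function of a ray `γ`:
`ρ_γ(t) = max{|w| : w is a subword of some r ∈ R̄ with |r| ≤ t and a subword of γ}`. -/
noncomputable def intersectionFn {S : Type} (R : Set (Word S)) (γ : ℕ → S × Bool)
    (t : ℕ) : ℕ :=
  sSup {n | ∃ w : Word S, (∃ r ∈ cyclicClosure R, r.length ≤ t ∧ w <:+: r) ∧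
    (∃ m, w <:+: rayPrefix γ m) ∧ w.length = n}

/-- A function is sublinear if `ρ(n)/n → 0`. -/
def Sublinear (ρ : ℕ → ℝ) : Prop :=
  Filter.Tendsto (fun n => ρ n / n) Filter.atTop (nhds 0)

/-- A weakly increasing function `f : ℕ → ℝ` is viable if `f(n) ≥ 6` for all `n`
and `f(n) → ∞`. -/
def Viable (f : ℕ → ℝ) : Prop :=
  Monotone f ∧ (∀ n, 6 ≤ f n) ∧ Filter.Tendsto f Filter.atTop Filter.atTop

/-- The `C'(1/f)` small-cancellation condition for a set of relators: every piece `p`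
that is a subword of some `r ∈ R̄` satisfies `|p| < |r|/f(|r|)`. -/
def CPrimeOverF {S : Type} (R : Set (Word S)) (f : ℕ → ℝ) : Prop :=
  ∀ p, IsPiece R p → ∀ r ∈ cyclicClosure R, p <:+: r →
    (p.length : ℝ) < (r.length : ℝ) / f r.length

/-- The pair `(x, R)` satisfies the `C'(1/f)` condition: every word `p` that is a
subword both of `x` and of some `r ∈ R̄` satisfies `|p| < |r|/f(|r|)`. -/
def PairCPrimeOverF {S : Type} (x : Word S) (R : Set (Word S)) (f : ℕ → ℝ) : Prop :=
  ∀ p, p <:+: x → ∀ r ∈ cyclicClosure R, p <:+: r →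
    (p.length : ℝ) < (r.length : ℝ) / f r.length

/-- The increasing partial small-cancellation condition (IPSC). -/
def IPSC {S : Type} (R : Set (Word S)) : Prop :=
  ∀ n : ℕ → ℕ, (∀ i, 0 < n i) → ∃ f : ℕ → ℝ, Viable f ∧
    ∀ K : ℕ, ∃ i, K ≤ i ∧ ∃ x y : Word S, x ++ y ∈ cyclicClosure R ∧
      n i ≤ (x ++ y).length ∧ ((x ++ y).length : ℝ) / i ≤ x.length ∧
      PairCPrimeOverF x R f

end SmallCancel

namespace SmallCancel

/-- A word `w` of length `n` (with letters in `S`) is non-periodic if the `2n` words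
obtained as cyclic shifts of `w` and of `w⁻¹` are pairwise distinct. -/
def NonPeriodic {S : Type} (w : Word S) : Prop :=
  Function.Injective fun p : Fin w.length × Bool =>
    if p.2 then w.rotate p.1 else (wInv w).rotate p.1

/-- The data of the Section-4 construction: an integer `N ≥ 28`, a positive multiple
`L` of `N`, and three distinct non-periodic positive words `r_1¹, r_2¹, r_3¹` of
length `L` over `S` (indexed by `ZMod 3`, with the paper's index `i ∈ {1,2,3}` taken
modulo 3) satisfying the `C'(1/(4N))` small-cancellation condition, each given as the
concatenation of `N` blocks `y_(i,l)¹` of length `L/N`. -/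
structure Section4Data (S : Type) where
  /-- the parameter `N ≥ 28` -/
  N : ℕ
  hN : 28 ≤ N
  /-- the length `L`, a positive multiple of `N` -/
  L : ℕ
  hdvd : N ∣ L
  hLpos : 0 < L
  /-- the blocks `y_(i,l)¹`, so that `r_i¹ = y_(i,1)¹ ⋯ y_(i,N)¹` -/
  y1 : ZMod 3 → Fin N → Word S
  hlen : ∀ i l, (y1 i l).length = L / N
  /-- the level-1 relators use only letters of `S` (no inverse letters) -/
  hletters : ∀ i l, ∀ a ∈ y1 i l, a.2 = true
  /-- the three level-1 relators are pairwise distinct -/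
  hdistinct : Function.Injective fun i : ZMod 3 => (List.ofFn fun l => y1 i l).flatten
  /-- the three level-1 relators are non-periodic -/
  hnonper : ∀ i : ZMod 3, NonPeriodic ((List.ofFn fun l => y1 i l).flatten)
  /-- the level-1 relators satisfy the `C'(1/(4N))` condition -/
  hsc : SmallCancellation
    {w | ∃ i : ZMod 3, w = (List.ofFn fun l => y1 i l).flatten} (1 / (4 * N))

namespace Section4Data

variable {S : Type}

/-- The words `y_(i,l)^k` of the Section-4 construction, defined for levels `k ≥ 1`
by `y_(i,l)^{k+1} = ∏_{j=1}^{N} (y_(i,j)^k · y_(i+1,l)^k)` (the value at `k = 0` is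
irrelevant and set to `y1`). -/
def y (D : Section4Data S) : ℕ → ZMod 3 → Fin D.N → Word S
  | 0 => D.y1
  | 1 => D.y1
  | (k + 2) => fun i l =>
      (List.ofFn fun j : Fin D.N => D.y (k + 1) i j ++ D.y (k + 1) (i + 1) l).flatten

/-- The relators `r_i^k = ∏_{j=1}^{N} y_(i,j)^k` (for `k = 1` this agrees with the
given level-1 relators). -/
def r (D : Section4Data S) (k : ℕ) (i : ZMod 3) : Word S :=
  (List.ofFn fun j : Fin D.N => D.y k i j).flatten

/-- The set of relators `R = {r_i^k : 1 ≤ i ≤ 3, k ≥ 1}` of the Section-4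
construction. -/
def R (D : Section4Data S) : Set (Word S) :=
  {w | ∃ k, 1 ≤ k ∧ ∃ i : ZMod 3, w = D.r k i}

end Section4Data

end SmallCancel

open SmallCancel Section4Data


namespace SmallCancel
variable {S : Type}

lemma wInv_append (a b : Word S) : wInv (a ++ b) = wInv b ++ wInv a := by
  simp [wInv]

lemma length_wInv (w : Word S) : (wInv w).length = w.length := by simp [wInv]

lemma wInv_infix {a b : Word S} (h : a <:+: b) : wInv a <:+: wInv b := by
  obtain ⟨u, v, rfl⟩ := h
  exact ⟨wInv v, wInv u, by simp [wInv_append]⟩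

lemma wInv_flatten (cs : List (Word S)) :
    wInv cs.flatten = ((cs.map wInv).reverse).flatten := by
  induction cs with
  | nil => simp [wInv]
  | cons c cs ih => simp [wInv_append, ih]

lemma infix_aux {α : Type*} (a b : List α) : b ++ a <:+: (a ++ b) ++ (a ++ b) :=
  ⟨a, b, by simp [List.append_assoc]⟩

lemma rotate_infix {α : Type*} (l : List α) (n : ℕ) : l.rotate n <:+: l ++ l := by
  rcases eq_or_ne l [] with rfl | h
  · simp
  · rw [← List.rotate_mod]
    have hm : n % l.length ≤ l.length := (Nat.mod_lt _ (List.length_pos_of_ne_nil h)).le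
    rw [List.rotate_eq_drop_append_take hm]
    have := infix_aux (l.take (n % l.length)) (l.drop (n % l.length))
    rwa [List.take_append_drop] at this

lemma flatten_decomp {P : Word S → Prop} (ws : List (Word S))
    (h : ∀ w ∈ ws, ∃ cs : List (Word S), (∀ c ∈ cs, P c) ∧ w = cs.flatten) :
    ∃ cs : List (Word S), (∀ c ∈ cs, P c) ∧ ws.flatten = cs.flatten := by
  induction ws with
  | nil => exact ⟨[], by simp, by simp⟩
  | cons w ws ih =>
    obtain ⟨cs₁, h1, e1⟩ := h w (by simp)
    obtain ⟨cs₂, h2, e2⟩ := ih (fun w hw => h w (by simp [hw]))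
    refine ⟨cs₁ ++ cs₂, ?_, by simp [e1, e2]⟩
    intro c hc
    rcases List.mem_append.1 hc with h' | h'
    exacts [h1 c h', h2 c h']

lemma blockA_aux {α : Type*} {B : ℕ} (hB : 0 < B) :
    ∀ (cs : List (List α)) (u w v : List α), (∀ c ∈ cs, c.length = B) →
      u ++ (w ++ v) = cs.flatten → 2 * B ≤ w.length → ∃ c ∈ cs, c <:+: w := by
  intro cs
  induction cs with
  | nil =>
    intro u w v _ he hw
    simp at he
    obtain ⟨-, rfl, -⟩ := he
    simp at hw
    omega
  | cons c cs ih =>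
    intro u w v hlen he hw
    have hc : c.length = B := hlen c (by simp)
    have hfl : (c :: cs).flatten = c ++ cs.flatten := by simp
    rw [hfl] at he
    have hpre_u : u <+: c ++ cs.flatten := ⟨w ++ v, he⟩
    have hpre_c : c <+: c ++ cs.flatten := ⟨cs.flatten, rfl⟩
    by_cases hu : B ≤ u.length
    · have hcu : c <+: u := List.prefix_of_prefix_length_le hpre_c hpre_u (by omega)
      obtain ⟨u', rfl⟩ := hcu
      rw [List.append_assoc] at he
      have he' : u' ++ (w ++ v) = cs.flatten := List.append_cancel_left he
      obtain ⟨c', hc', hinf⟩ := ih u' w v (fun c hc => hlen c (by simp [hc])) he' hw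
      exact ⟨c', by simp [hc'], hinf⟩
    · have hcu : u <+: c := List.prefix_of_prefix_length_le hpre_u hpre_c (by omega)
      obtain ⟨c₁, rfl⟩ := hcu
      rw [List.append_assoc] at he
      have he2 : w ++ v = c₁ ++ cs.flatten := List.append_cancel_left he
      rw [List.length_append] at hc
      have hc₁w : c₁ <+: w :=
        List.prefix_of_prefix_length_le ⟨cs.flatten, he2.symm⟩ ⟨v, rfl⟩ (by omega)
      obtain ⟨w₁, rfl⟩ := hc₁w
      rw [List.append_assoc] at he2
      have he3 : w₁ ++ v = cs.flatten := List.append_cancel_left he2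
      rw [List.length_append] at hw
      have hw₁ : B ≤ w₁.length := by omega
      cases cs with
      | nil =>
        exfalso
        simp at he3
        obtain ⟨rfl, -⟩ := he3
        simp at hw₁
        omega
      | cons c₂ cs' =>
        have hc₂ : c₂.length = B := hlen c₂ (by simp)
        have hc₂w₁ : c₂ <+: w₁ := by
          refine List.prefix_of_prefix_length_le ⟨cs'.flatten, by simp⟩ ⟨v, he3⟩ (by omega)
        obtain ⟨t, rfl⟩ := hc₂w₁
        exact ⟨c₂, by simp, ⟨c₁, t, by simp⟩⟩

lemma blockA {α : Type*} {B : ℕ} (hB : 0 < B) (cs : List (List α)) (w : List α)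
    (hlen : ∀ c ∈ cs, c.length = B) (h : w <:+: cs.flatten) (hw : 2 * B ≤ w.length) :
    ∃ c ∈ cs, c <:+: w := by
  obtain ⟨u, v, he⟩ := h
  rw [List.append_assoc] at he
  exact blockA_aux hB cs u w v hlen he hw


namespace Section4Data

/-- block length at level `k` -/
def bl (D : Section4Data S) (k : ℕ) : ℕ := (D.L / D.N) * (2 * D.N) ^ (k - 1)

variable (D : Section4Data S)

lemma Npos : 0 < D.N := lt_of_lt_of_le (by norm_num) D.hN

lemma qpos : 0 < D.L / D.N := Nat.div_pos (Nat.le_of_dvd D.hLpos D.hdvd) D.Npos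

lemma bl_pos (k : ℕ) : 0 < D.bl k := by
  have h1 := D.Npos
  have h2 := D.qpos
  have : 0 < (2 * D.N) ^ (k - 1) := Nat.pow_pos (by omega)
  exact Nat.mul_pos h2 this

lemma bl_mono : Monotone D.bl := by
  intro a b hab
  exact Nat.mul_le_mul_left _ (Nat.pow_le_pow_right (by have := D.Npos; omega) (by omega))

lemma length_y : ∀ k, 1 ≤ k → ∀ (i : ZMod 3) (l : Fin D.N), (D.y k i l).length = D.bl k := by
  intro k hk
  induction k, hk using Nat.le_induction with
  | base =>
    intro i l
    simp [Section4Data.y, D.hlen, bl]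
  | succ k hk ih =>
    intro i l
    obtain ⟨k', rfl⟩ : ∃ k', k = k' + 1 := ⟨k - 1, by omega⟩
    show (D.y (k' + 2) i l).length = _
    rw [Section4Data.y, List.length_flatten, List.map_ofFn, List.sum_ofFn]
    have : ∀ j : Fin D.N,
        (List.length ∘ fun j : Fin D.N => D.y (k' + 1) i j ++ D.y (k' + 1) (i + 1) l) j
          = 2 * D.bl (k' + 1) := by
      intro j
      simp [ih i j, ih (i + 1) l]
      ring
    rw [Finset.sum_congr rfl (fun j _ => this j), Finset.sum_const, Finset.card_univ,
      Fintype.card_fin]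
    show D.N • (2 * D.bl (k' + 1)) = D.bl (k' + 2)
    simp only [smul_eq_mul, bl]
    have h1 : k' + 1 - 1 = k' := by omega
    have h2 : k' + 2 - 1 = k' + 1 := by omega
    rw [h1, h2, pow_succ]
    ring

lemma y_decomp (K : ℕ) (hK : 1 ≤ K) :
    ∀ m, K ≤ m → ∀ (i : ZMod 3) (l : Fin D.N),
    ∃ cs : List (Word S), (∀ c ∈ cs, ∃ i' l', c = D.y K i' l') ∧ D.y m i l = cs.flatten := by
  intro m hm
  induction m, hm using Nat.le_induction with
  | base =>
    intro i l
    exact ⟨[D.y K i l], by rintro c hc; simp at hc; exact ⟨i, l, hc⟩, by simp⟩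
  | succ m hm ih =>
    intro i l
    obtain ⟨m', rfl⟩ : ∃ m', m = m' + 1 := ⟨m - 1, by omega⟩
    show ∃ cs : List (Word S), _ ∧ D.y (m' + 2) i l = cs.flatten
    rw [Section4Data.y]
    apply flatten_decomp
    intro w hw
    rw [List.mem_ofFn] at hw
    obtain ⟨j, rfl⟩ := hw
    obtain ⟨cs₁, h1, e1⟩ := ih i j
    obtain ⟨cs₂, h2, e2⟩ := ih (i + 1) l
    refine ⟨cs₁ ++ cs₂, ?_, by simp [e1, e2]⟩
    intro c hc
    rcases List.mem_append.1 hc with h | h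
    exacts [h1 c h, h2 c h]

lemma r_decomp (K : ℕ) (hK : 1 ≤ K) (m : ℕ) (hm : K ≤ m) (i : ZMod 3) :
    ∃ cs : List (Word S), (∀ c ∈ cs, ∃ i' l', c = D.y K i' l') ∧ D.r m i = cs.flatten := by
  rw [Section4Data.r]
  apply flatten_decomp
  intro w hw
  rw [List.mem_ofFn] at hw
  obtain ⟨j, rfl⟩ := hw
  exact D.y_decomp K hK m hm i j

lemma length_r (m : ℕ) (hm : 1 ≤ m) (i : ZMod 3) : (D.r m i).length = D.N * D.bl m := by
  rw [Section4Data.r, List.length_flatten, List.map_ofFn, List.sum_ofFn]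
  have : ∀ j : Fin D.N, (List.length ∘ fun j : Fin D.N => D.y m i j) j = D.bl m := by
    intro j; simp [D.length_y m hm]
  rw [Finset.sum_congr rfl (fun j _ => this j), Finset.sum_const, Finset.card_univ,
    Fintype.card_fin]
  simp [mul_comm]

end Section4Data
end SmallCancel

/-- Proposition 4.7 of the paper. Let `G = ⟨S|R⟩` be the group of
the Section-4 construction. Every geodesic ray in `G` whose intersection function is
sublinear has bounded intersection function. (By the criteria of
Arzhantseva–Cashen–Gruber–Hume, this says exactly that every Morse geodesic ray in
`Cay(G,S)` is strongly contracting, Theorem A(2).) -/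
theorem section4_morse_implies_strongly_contracting {S : Type} [Finite S]
    (D : Section4Data S) (γ : ℕ → S × Bool)
    (hgeo : IsGeodesicRay D.R γ)
    (hsub : Sublinear fun t => (intersectionFn D.R γ t : ℝ)) :
    ∃ C : ℕ, ∀ t, intersectionFn D.R γ t ≤ C := by
  classical
  by_cases hP : ∀ K, 1 ≤ K → ∃ (i : ZMod 3) (l : Fin D.N) (m : ℕ),
      D.y K i l <:+: rayPrefix γ m ∨ wInv (D.y K i l) <:+: rayPrefix γ m
  · exfalso
    have hN := D.Npos
    have h0 : (0:ℝ) < 1 / D.N := by positivity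
    have hev := hsub.eventually (gt_mem_nhds h0)
    obtain ⟨n₀, hn₀⟩ := Filter.eventually_atTop.1 hev
    set K := max n₀ 1 with hKdef
    have hK1 : 1 ≤ K := le_max_right _ _
    set t := D.N * D.bl K with htdef
    have hblpos := D.bl_pos K
    have ht : n₀ ≤ t := by
      have h1 : 2 ^ (K - 1) ≤ D.bl K := by
        calc 2 ^ (K - 1) = 1 * 2 ^ (K - 1) := (one_mul _).symm
          _ ≤ (D.L / D.N) * (2 * D.N) ^ (K - 1) :=
            Nat.mul_le_mul D.qpos (Nat.pow_le_pow_left (by omega) _)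
      have h2 : 2 ^ K ≤ t := by
        have h22 : 2 * 2 ^ (K - 1) = 2 ^ K := by
          rw [← pow_succ']
          congr 1
          omega
        calc 2 ^ K = 2 * 2 ^ (K - 1) := h22.symm
          _ ≤ D.N * D.bl K := Nat.mul_le_mul (by have := D.hN; omega) h1
      have h3 : K < 2 ^ K := Nat.lt_two_pow_self
      have h4 : n₀ ≤ K := le_max_left _ _
      exact le_trans h4 (le_trans h3.le h2)
    obtain ⟨i, l, m, hcase⟩ := hP K hK1
    have hbdd : BddAbove {n | ∃ w : Word S,
        (∃ r ∈ cyclicClosure D.R, r.length ≤ t ∧ w <:+: r) ∧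
        (∃ m, w <:+: rayPrefix γ m) ∧ w.length = n} := by
      refine ⟨t, ?_⟩
      rintro n ⟨w, ⟨r, _, hrt, hwr⟩, -, rfl⟩
      exact hwr.length_le.trans hrt
    have hrR : D.r K i ∈ D.R := ⟨K, hK1, i, rfl⟩
    have hrlen : (D.r K i).length = t := D.length_r K hK1 i
    have hyinf : D.y K i l <:+: D.r K i := by
      rw [Section4Data.r]
      exact List.infix_of_mem_flatten (by rw [List.mem_ofFn]; exact ⟨l, rfl⟩)
    have hmem : D.bl K ∈ {n | ∃ w : Word S,
        (∃ r ∈ cyclicClosure D.R, r.length ≤ t ∧ w <:+: r) ∧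
        (∃ m, w <:+: rayPrefix γ m) ∧ w.length = n} := by
      rcases hcase with h | h
      · exact ⟨D.y K i l,
          ⟨D.r K i, ⟨D.r K i, hrR, 0, Or.inl (List.rotate_zero _).symm⟩,
            le_of_eq hrlen, hyinf⟩,
          ⟨m, h⟩, D.length_y K hK1 i l⟩
      · refine ⟨wInv (D.y K i l),
          ⟨wInv (D.r K i), ⟨D.r K i, hrR, 0, Or.inr (List.rotate_zero _).symm⟩,
            ?_, wInv_infix hyinf⟩,
          ⟨m, h⟩, by rw [length_wInv]; exact D.length_y K hK1 i l⟩
        rw [length_wInv]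
        exact le_of_eq hrlen
    have hle : D.bl K ≤ intersectionFn D.R γ t := le_csSup hbdd hmem
    have hratio := hn₀ t ht
    have htpos : 0 < t := Nat.mul_pos hN hblpos
    have hbl : (D.bl K : ℝ) / (t : ℝ) = 1 / D.N := by
      rw [htdef]
      have hb0 : (D.bl K : ℝ) ≠ 0 := by exact_mod_cast hblpos.ne'
      have hn0 : (D.N : ℝ) ≠ 0 := by exact_mod_cast hN.ne'
      push_cast
      field_simp
    have hge : (D.bl K : ℝ) / (t : ℝ) ≤ (intersectionFn D.R γ t : ℝ) / t := by
      gcongr <;> exact_mod_cast hle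
    rw [hbl] at hge
    simp only at hratio
    linarith
  · push_neg at hP
    obtain ⟨K, hK1, hKnb⟩ := hP
    refine ⟨(D.N + 2) * D.bl K, fun t => ?_⟩
    have hblpos := D.bl_pos K
    refine csSup_le' ?_
    rintro n ⟨w, ⟨r', hr', hrt, hwr⟩, ⟨m, hwγ⟩, rfl⟩
    obtain ⟨r0, ⟨j, hj1, i, rfl⟩, nrot, hrot⟩ := hr'
    have hr'len : r'.length = D.N * D.bl j := by
      rcases hrot with rfl | rfl
      · rw [List.length_rotate, D.length_r j hj1]
      · rw [List.length_rotate, length_wInv, D.length_r j hj1]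
    by_cases hjK : j ≤ K
    · calc w.length ≤ r'.length := hwr.length_le
        _ = D.N * D.bl j := hr'len
        _ ≤ (D.N + 2) * D.bl K := Nat.mul_le_mul (by omega) (D.bl_mono hjK)
    · have hKj : K ≤ j := by omega
      obtain ⟨ds, hds, hflat⟩ := D.r_decomp K hK1 j hKj i
      have hblocks : ∃ es : List (Word S),
          (∀ c ∈ es, (∃ i' l', c = D.y K i' l') ∨ (∃ i' l', c = wInv (D.y K i' l'))) ∧
          r' <:+: es.flatten := by
        rcases hrot with rfl | rfl
        · refine ⟨ds ++ ds, ?_, ?_⟩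
          · intro c hc
            rcases List.mem_append.1 hc with h | h
            exacts [Or.inl (hds c h), Or.inl (hds c h)]
          · rw [List.flatten_append, ← hflat]
            exact rotate_infix _ _
        · refine ⟨(ds.map wInv).reverse ++ (ds.map wInv).reverse, ?_, ?_⟩
          · intro c hc
            have hc' : c ∈ (ds.map wInv).reverse := by
              rcases List.mem_append.1 hc with h | h <;> exact h
            rw [List.mem_reverse, List.mem_map] at hc'
            obtain ⟨d, hd, rfl⟩ := hc'
            obtain ⟨i', l', rfl⟩ := hds d hd
            exact Or.inr ⟨i', l', rfl⟩
          · rw [List.flatten_append]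
            have hwinv : wInv (D.r j i) = ((ds.map wInv).reverse).flatten := by
              rw [hflat, wInv_flatten]
            rw [← hwinv]
            exact rotate_infix _ _
      obtain ⟨es, hes, hres⟩ := hblocks
      by_cases hlen2 : 2 * D.bl K ≤ w.length
      · exfalso
        have hlens : ∀ c ∈ es, c.length = D.bl K := by
          intro c hc
          rcases hes c hc with ⟨i', l', rfl⟩ | ⟨i', l', rfl⟩
          · exact D.length_y K hK1 i' l'
          · rw [length_wInv]; exact D.length_y K hK1 i' l'
        obtain ⟨c, hc, hcw⟩ := blockA hblpos es w hlens (hwr.trans hres) hlen2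
        rcases hes c hc with ⟨i', l', rfl⟩ | ⟨i', l', rfl⟩
        · exact (hKnb i' l' m).1 (hcw.trans hwγ)
        · exact (hKnb i' l' m).2 (hcw.trans hwγ)
      · have h2 : 2 * D.bl K ≤ (D.N + 2) * D.bl K := Nat.mul_le_mul_right _ (by omega)
        omega
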